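/- Let Σ consist of unary symbols f and C and constants a and b, and let R be the TRS with rules a → f(a), b → f(b), C(b) → C(C(a)). Let C^ω denote the unique term with C^ω = C(C^ω). Then C(a) =∞ C^ω holds, but ¬(C(a) ((∞→)⁻¹ ∪ ∞→)* C^ω). Hence the inclusion ((∞→)⁻¹ ∪ ∞→)* ⊆ =∞ is strict for this TRS. -/

import Mathlib

open Relation

/-- A signature: a type of function symbols together with an arity for each symbol. -/
structure Signature where
  Sym : Type
  ar : Sym → ℕ

/-- The polynomial functor whose final coalgebra is the set of (finite and infinite)
terms over the signature `Sg` and the set `X` of variables. -/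
def TermF (Sg : Signature) (X : Type) : PFunctor.{0} :=
  ⟨X ⊕ Sg.Sym, fun a => Sum.rec (fun _ => Empty) (fun f => Fin (Sg.ar f)) a⟩

/-- The set `T` of finite and infinite terms over `Sg` and `X`, defined coinductively
(as the final coalgebra, i.e. the M-type, of `TermF Sg X`). -/
def Tm (Sg : Signature) (X : Type) : Type := PFunctor.M (TermF Sg X)

variable {Sg : Signature} {X : Type}

/-- The term consisting of a single variable. -/
def Tm.var (x : X) : Tm Sg X := PFunctor.M.mk ⟨Sum.inl x, Empty.elim⟩

/-- The term `f(t₁,…,tₙ)` with root symbol `f` and arguments `args`. -/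
def Tm.node (f : Sg.Sym) (args : Fin (Sg.ar f) → Tm Sg X) : Tm Sg X :=
  PFunctor.M.mk ⟨Sum.inr f, args⟩

/-- One step of the corecursive definition of substitution:
`Sum.inl t` means `t` still has to be substituted, `Sum.inr t` means `t` is copied. -/
def substAux (σ : X → Tm Sg X) :
    (Tm Sg X ⊕ Tm Sg X) → (TermF Sg X) (Tm Sg X ⊕ Tm Sg X) := fun s =>
  match s with
  | Sum.inl t =>
    match PFunctor.M.dest t with
    | ⟨Sum.inl x, _⟩ =>
        ⟨(PFunctor.M.dest (σ x)).1, fun b => Sum.inr ((PFunctor.M.dest (σ x)).2 b)⟩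
    | ⟨Sum.inr f, k⟩ => ⟨Sum.inr f, fun b => Sum.inl (k b)⟩
  | Sum.inr t =>
      ⟨(PFunctor.M.dest t).1, fun b => Sum.inr ((PFunctor.M.dest t).2 b)⟩

/-- Application `tσ` of a substitution `σ : X → T` to a term `t`, defined corecursively. -/
def subst (σ : X → Tm Sg X) (t : Tm Sg X) : Tm Sg X :=
  PFunctor.M.corec (substAux σ) (Sum.inl t)

/-- `Occurs x t`: the variable `x` occurs in the term `t`. -/
inductive Occurs (x : X) : Tm Sg X → Prop
  | here {t : Tm Sg X} : t = Tm.var x → Occurs x t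
  | deeper {t : Tm Sg X} {f : Sg.Sym} {args : Fin (Sg.ar f) → Tm Sg X}
      (i : Fin (Sg.ar f)) : t = Tm.node f args → Occurs x (args i) → Occurs x t

/-- A term rewriting system over `Sg` and `X`: a set of rules `ℓ → r` such that
`ℓ` is not a variable and all variables of `r` occur in `ℓ`. -/
structure TRS (Sg : Signature) (X : Type) where
  rules : Set (Tm Sg X × Tm Sg X)
  lhs_not_var : ∀ l r, (l, r) ∈ rules → ∀ x : X, l ≠ Tm.var x
  vars_lhs : ∀ l r, (l, r) ∈ rules → ∀ x : X, Occurs x r → Occurs x l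

/-- Relations on terms. -/
abbrev TRel (Sg : Signature) (X : Type) := Tm Sg X → Tm Sg X → Prop

/-- The root step relation `→ε := {(ℓσ, rσ) | ℓ → r ∈ R, σ a substitution}`. -/
def RootStep (R : TRS Sg X) : TRel Sg X := fun s t =>
  ∃ l r, (l, r) ∈ R.rules ∧ ∃ σ : X → Tm Sg X, s = subst σ l ∧ t = subst σ r

/-- `StepAt Q p s t`: a `Q`-step at position `p`, i.e. `s = C[u]`, `t = C[v]` with
`(u,v) ∈ Q` and `C` a one-hole context whose hole is at position `p`. -/
inductive StepAt (Q : TRel Sg X) : List ℕ → Tm Sg X → Tm Sg X → Prop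
  | here {s t : Tm Sg X} : Q s t → StepAt Q [] s t
  | deeper {f : Sg.Sym} {ss ts : Fin (Sg.ar f) → Tm Sg X} (i : Fin (Sg.ar f))
      {p : List ℕ} : StepAt Q p (ss i) (ts i) → (∀ j, j ≠ i → ss j = ts j) →
      StepAt Q ((i : ℕ) :: p) (Tm.node f ss) (Tm.node f ts)

/-- The one-step rewrite relation `→` of a TRS: a root step applied inside a
one-hole context. -/
def Step (R : TRS Sg X) : TRel Sg X := fun s t => ∃ p, StepAt (RootStep R) p s t

/-- The lifting `↓R` of a relation `R`:
`↓R := {(f(s₁,…,sₙ), f(t₁,…,tₙ)) | f ∈ Σ, s₁ R t₁, …, sₙ R tₙ} ∪ Id`. -/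
def liftRel (R : TRel Sg X) : TRel Sg X := fun s t =>
  s = t ∨ ∃ (f : Sg.Sym) (ss ts : Fin (Sg.ar f) → Tm Sg X),
    s = Tm.node f ss ∧ t = Tm.node f ts ∧ ∀ i, R (ss i) (ts i)

lemma liftRel_mono : Monotone (liftRel (Sg := Sg) (X := X)) := by
  intro R S h s t hst
  rcases hst with h1 | ⟨f, ss, ts, rfl, rfl, hi⟩
  · exact Or.inl h1
  · exact Or.inr ⟨f, ss, ts, rfl, rfl, fun i => h _ _ (hi i)⟩

/-- Relational composition `r ∘ s`. -/
def relComp (r s : TRel Sg X) : TRel Sg X := fun a c => ∃ b, r a b ∧ s b c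

/-- The monotone operator `S ↦ (→ε ∪ ↓R)* ∘ ↓S` (for a fixed `R`). -/
def iredInnerHom (R : TRS Sg X) (U : TRel Sg X) : TRel Sg X →o TRel Sg X where
  toFun S := relComp
    (ReflTransGen (fun s t => RootStep R s t ∨ liftRel U s t)) (liftRel S)
  monotone' := by
    intro S S' h a c hac
    rcases hac with ⟨b, h1, h2⟩
    exact ⟨b, h1, liftRel_mono h _ _ h2⟩

/-- The monotone operator `R ↦ νS.((→ε ∪ ↓R)* ∘ ↓S)`. -/
def iredHom (R : TRS Sg X) : TRel Sg X →o TRel Sg X where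
  toFun U := OrderHom.gfp (iredInnerHom R U)
  monotone' := by
    intro U V h
    apply OrderHom.gfp.monotone
    intro S a c hac
    rcases hac with ⟨b, h1, h2⟩
    refine ⟨b, ?_, h2⟩
    clear h2
    induction h1 with
    | refl => exact ReflTransGen.refl
    | tail _ hxy ih =>
      exact ReflTransGen.tail ih (hxy.imp id (fun h' => liftRel_mono h _ _ h'))

/-- The infinitary rewrite relation `→∞ := μR.νS.((→ε ∪ ↓R)* ∘ ↓S)`. -/
def ired (R : TRS Sg X) : TRel Sg X := OrderHom.lfp (iredHom R)

/-- The monotone operator `R' ↦ (→ε ∪ ↓R')*`. -/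
def biHom (R : TRS Sg X) : TRel Sg X →o TRel Sg X where
  toFun U := ReflTransGen (fun s t => RootStep R s t ∨ liftRel U s t)
  monotone' := by
    intro U V h a b hab
    induction hab with
    | refl => exact ReflTransGen.refl
    | tail _ hxy ih =>
      exact ReflTransGen.tail ih (hxy.imp id (fun h' => liftRel_mono h _ _ h'))

/-- The bi-infinite rewrite relation `∞→ := νR.(→ε ∪ ↓R)*`. -/
def bired (R : TRS Sg X) : TRel Sg X := OrderHom.gfp (biHom R)

/-- The monotone operator `R' ↦ (←ε ∪ →ε ∪ ↓R')*`. -/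
def ieqHom (R : TRS Sg X) : TRel Sg X →o TRel Sg X where
  toFun U := ReflTransGen (fun s t => RootStep R t s ∨ RootStep R s t ∨ liftRel U s t)
  monotone' := by
    intro U V h a b hab
    induction hab with
    | refl => exact ReflTransGen.refl
    | tail _ hxy ih =>
      exact ReflTransGen.tail ih
        (hxy.imp id (fun h' => h'.imp id (fun h'' => liftRel_mono h _ _ h'')))

/-- The infinitary equational reasoning relation `=∞ := νR.(←ε ∪ →ε ∪ ↓R)*`. -/
def ieq (R : TRS Sg X) : TRel Sg X := OrderHom.gfp (ieqHom R)

/-- `Agree n s t`: the terms `s` and `t` coincide up to depth `n`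
(i.e. `d(s,t) ≤ 2^{-n}` for the standard metric `d`). -/
def Agree : ℕ → Tm Sg X → Tm Sg X → Prop
  | 0, _, _ => True
  | n + 1, s, t =>
      (∃ x : X, s = Tm.var x ∧ t = Tm.var x) ∨
      ∃ (f : Sg.Sym) (ss ts : Fin (Sg.ar f) → Tm Sg X),
        s = Tm.node f ss ∧ t = Tm.node f ts ∧ ∀ i, Agree n (ss i) (ts i)

/-- `ConvTo t p l tl`: as `β` approaches the ordinal `l` from below,
`d(t β, tl)` tends to `0` and the depth `|p β|` tends to infinity. -/
def ConvTo (t : Ordinal.{0} → Tm Sg X) (p : Ordinal.{0} → List ℕ) (l : Ordinal.{0})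
    (tl : Tm Sg X) : Prop :=
  (∀ n : ℕ, ∃ β₀ < l, ∀ β, β₀ ≤ β → β < l → Agree n (t β) tl) ∧
  (∀ n : ℕ, ∃ β₀ < l, ∀ β, β₀ ≤ β → β < l → n ≤ (p β).length)

/-- Limit ordinals (the old Mathlib `Ordinal.IsLimit`, removed since). -/
def Ordinal.IsLimit (o : Ordinal) : Prop := Order.IsSuccLimit o

/-- A transfinite sequence of `Q`-steps `(t_β →_{p_β} t_{β+1})_{β<α}` of ordinal
length `α`, weakly continuous and with depths tending to infinity at every limit
ordinal `λ < α`. -/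
structure TransSeq (Q : TRel Sg X) (α : Ordinal.{0}) where
  t : Ordinal.{0} → Tm Sg X
  pos : Ordinal.{0} → List ℕ
  step : ∀ β < α, StepAt Q (pos β) (t β) (t (β + 1))
  conv : ∀ l < α, Ordinal.IsLimit l → ConvTo t pos l (t l)

/-- A transfinite rewrite sequence is strongly convergent if its length is a successor
ordinal (or zero), or there exists a final term to which it converges (with depths
tending to infinity) at the limit. -/
def TransSeq.StronglyConvergent {Q : TRel Sg X} {α : Ordinal.{0}} (s : TransSeq Q α) : Prop :=
  α.IsLimit → ∃ tl, ConvTo s.t s.pos α tl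

/-- `SCRed Q s t`: there is a strongly convergent transfinite sequence of `Q`-steps
from `s` to `t`. -/
def SCRed (Q : TRel Sg X) : TRel Sg X := fun a b =>
  ∃ (α : Ordinal.{0}) (s : TransSeq Q α), s.t 0 = a ∧ s.t α = b ∧
    (α.IsLimit → ConvTo s.t s.pos α b)

/-- The standard, ordinal-based infinitary rewrite relation `→∞_ord`:
strongly convergent transfinite rewrite sequences. -/
def iredOrd (R : TRS Sg X) : TRel Sg X := SCRed (RootStep R)

-- auxiliary facts about the term constructors
lemma node_ne_var (f : Sg.Sym) (args : Fin (Sg.ar f) → Tm Sg X) (x : X) :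
    Tm.node f args ≠ Tm.var x := by
  intro h
  have h1 := congrArg (fun u => (PFunctor.M.dest u).1) h
  simp only [Tm.node, Tm.var, PFunctor.M.dest_mk] at h1
  exact Sum.inr_ne_inl h1

lemma node_inj_sym {f g : Sg.Sym} {ss : Fin (Sg.ar f) → Tm Sg X}
    {ts : Fin (Sg.ar g) → Tm Sg X} (h : Tm.node f ss = Tm.node g ts) : f = g := by
  have h1 := congrArg (fun u => (PFunctor.M.dest u).1) h
  simp only [Tm.node, PFunctor.M.dest_mk] at h1
  exact Sum.inr.inj h1

lemma node_inj_args {f : Sg.Sym} {ss ts : Fin (Sg.ar f) → Tm Sg X}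
    (h : Tm.node f ss = Tm.node f ts) : ss = ts := by
  have h' : (PFunctor.M.mk ⟨Sum.inr f, ss⟩ : Tm Sg X) = PFunctor.M.mk ⟨Sum.inr f, ts⟩ := h
  have h1 := PFunctor.M.mk_inj h'
  injection h1 with h2 h3

lemma var_inj {x y : X} (h : (Tm.var x : Tm Sg X) = Tm.var y) : x = y := by
  have h1 := congrArg (fun u => (PFunctor.M.dest u).1) h
  simp only [Tm.var, PFunctor.M.dest_mk] at h1
  exact Sum.inl.inj h1

lemma occurs_var_iff {x y : X} : Occurs x (Tm.var y : Tm Sg X) ↔ x = y := by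
  constructor
  · intro h
    cases h with
    | here h => exact (var_inj h.symm)
    | deeper i h _ => exact absurd h.symm (node_ne_var _ _ _)
  · rintro rfl
    exact Occurs.here rfl

lemma occurs_node_iff {x : X} {f : Sg.Sym} {args : Fin (Sg.ar f) → Tm Sg X} :
    Occurs x (Tm.node f args) ↔ ∃ i, Occurs x (args i) := by
  constructor
  · intro h
    cases h with
    | here h => exact absurd h (node_ne_var _ _ _)
    | deeper i h hocc =>
      obtain rfl := node_inj_sym h
      obtain rfl := node_inj_args h
      exact ⟨i, hocc⟩
  · rintro ⟨i, h⟩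
    exact Occurs.deeper i rfl h

/-! ### The TRS with rules `a → f(a)`, `b → f(b)`, `C(b) → C(C(a))` -/

inductive SymFC : Type
  | f : SymFC
  | C : SymFC
  | a : SymFC
  | b : SymFC

/-- The signature with unary symbols `f` and `C` and constants `a` and `b`. -/
def SgFC : Signature := ⟨SymFC, fun s => match s with | .f => 1 | .C => 1 | .a => 0 | .b => 0⟩

def tmA3 : Tm SgFC ℕ := Tm.node SymFC.a Fin.elim0
def tmB3 : Tm SgFC ℕ := Tm.node SymFC.b Fin.elim0
def tmF3 (u : Tm SgFC ℕ) : Tm SgFC ℕ := Tm.node SymFC.f (fun _ => u)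
def tmC3 (u : Tm SgFC ℕ) : Tm SgFC ℕ := Tm.node SymFC.C (fun _ => u)

/-- The TRS with the rules `a → f(a)`, `b → f(b)`, `C(b) → C(C(a))`. -/
def RFC : TRS SgFC ℕ where
  rules := {(tmA3, tmF3 tmA3), (tmB3, tmF3 tmB3), (tmC3 tmB3, tmC3 (tmC3 tmA3))}
  lhs_not_var := by
    rintro l r hm x
    simp only [Set.mem_insert_iff, Set.mem_singleton_iff, Prod.mk.injEq] at hm
    rcases hm with ⟨rfl, rfl⟩ | ⟨rfl, rfl⟩ | ⟨rfl, rfl⟩ <;> exact node_ne_var _ _ _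
  vars_lhs := by
    rintro l r hm x h
    simp only [Set.mem_insert_iff, Set.mem_singleton_iff, Prod.mk.injEq] at hm
    rcases hm with ⟨rfl, rfl⟩ | ⟨rfl, rfl⟩ | ⟨rfl, rfl⟩
    · rcases occurs_node_iff.mp h with ⟨i, h⟩
      exact h
    · rcases occurs_node_iff.mp h with ⟨i, h⟩
      exact h
    · rcases occurs_node_iff.mp h with ⟨i, h⟩
      rcases occurs_node_iff.mp h with ⟨j, h⟩
      rcases occurs_node_iff.mp h with ⟨k, h⟩
      exact k.elim0


/-! ### Auxiliary lemmas -/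

section GenAux
variable {Sg : Signature} {X : Type}

lemma subst_node (σ : X → Tm Sg X) (f : Sg.Sym) (args : Fin (Sg.ar f) → Tm Sg X) :
    subst σ (Tm.node f args) = Tm.node f (fun i => subst σ (args i)) := by
  have hsub : substAux σ (Sum.inl (Tm.node f args))
      = ⟨Sum.inr f, fun b => Sum.inl (args b)⟩ := by
    have hd : PFunctor.M.dest (Tm.node f args) = (⟨Sum.inr f, args⟩ : (TermF Sg X) (Tm Sg X)) :=
      PFunctor.M.dest_mk _
    simp only [substAux, hd]; rfl
  have h : PFunctor.M.dest (subst σ (Tm.node f args))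
      = ⟨Sum.inr f, fun i => subst σ (args i)⟩ := by
    show PFunctor.M.dest (PFunctor.M.corec (substAux σ) (Sum.inl (Tm.node f args))) = _
    rw [PFunctor.M.dest_corec, hsub]
    rfl
  exact (PFunctor.M.mk_dest (subst σ (Tm.node f args))).symm.trans (congrArg PFunctor.M.mk h)

lemma eq_of_agree {s t : Tm Sg X} (h : ∀ n, Agree n s t) : s = t := by
  apply PFunctor.M.bisim (fun x y => ∀ n, Agree n x y) _ _ _ h
  intro x y hxy
  rcases hxy 1 with ⟨v, hx, hy⟩ | ⟨f, ss, ts, hx, hy, _⟩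
  · subst hx; subst hy
    exact ⟨Sum.inl v, Empty.elim, Empty.elim, rfl, rfl, fun i => i.elim⟩
  · subst hx; subst hy
    refine ⟨Sum.inr f, ss, ts, rfl, rfl, ?_⟩
    intro i n
    rcases hxy (n+1) with ⟨v, hx, hy⟩ | ⟨g, ss', ts', hx, hy, hc⟩
    · exact absurd hx (node_ne_var _ _ _)
    · obtain rfl := node_inj_sym hx
      obtain rfl := node_inj_args hx
      obtain rfl := node_inj_args hy
      exact hc i

end GenAux

/-! ### Lemmas about the specific TRS -/

lemma tmC3_inj {u v : Tm SgFC ℕ} (h : tmC3 u = tmC3 v) : u = v := by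
  have h' : Tm.node SymFC.C (fun _ => u) = Tm.node SymFC.C (fun _ => v) := h
  exact congrFun (node_inj_args h') ⟨0, Nat.one_pos⟩

lemma nodeA_eq (ts : Fin (SgFC.ar SymFC.a) → Tm SgFC ℕ) : Tm.node SymFC.a ts = tmA3 :=
  congrArg _ (funext fun i => i.elim0)

lemma nodeB_eq (ts : Fin (SgFC.ar SymFC.b) → Tm SgFC ℕ) : Tm.node SymFC.b ts = tmB3 :=
  congrArg _ (funext fun i => i.elim0)

lemma nodeC_eq (ts : Fin (SgFC.ar SymFC.C) → Tm SgFC ℕ) :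
    Tm.node SymFC.C ts = tmC3 (ts ⟨0, Nat.one_pos⟩) :=
  congrArg _ (funext fun i => congrArg ts (Subsingleton.elim (α := Fin 1) i ⟨0, Nat.one_pos⟩))

lemma nodeF_eq (ts : Fin (SgFC.ar SymFC.f) → Tm SgFC ℕ) :
    Tm.node SymFC.f ts = tmF3 (ts ⟨0, Nat.one_pos⟩) :=
  congrArg _ (funext fun i => congrArg ts (Subsingleton.elim (α := Fin 1) i ⟨0, Nat.one_pos⟩))

lemma subst_tmA3 (σ : ℕ → Tm SgFC ℕ) : subst σ tmA3 = tmA3 := by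
  show subst σ (Tm.node SymFC.a Fin.elim0) = _
  exact (subst_node _ _ _).trans (nodeA_eq _)

lemma subst_tmB3 (σ : ℕ → Tm SgFC ℕ) : subst σ tmB3 = tmB3 := by
  show subst σ (Tm.node SymFC.b Fin.elim0) = _
  exact (subst_node _ _ _).trans (nodeB_eq _)

lemma subst_tmF3 (σ : ℕ → Tm SgFC ℕ) (u : Tm SgFC ℕ) :
    subst σ (tmF3 u) = tmF3 (subst σ u) := by
  show subst σ (Tm.node SymFC.f fun _ => u) = _
  exact subst_node _ _ _

lemma subst_tmC3 (σ : ℕ → Tm SgFC ℕ) (u : Tm SgFC ℕ) :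
    subst σ (tmC3 u) = tmC3 (subst σ u) := by
  show subst σ (Tm.node SymFC.C fun _ => u) = _
  exact subst_node _ _ _

lemma rs_a : RootStep RFC tmA3 (tmF3 tmA3) :=
  ⟨tmA3, tmF3 tmA3, by simp [RFC], fun _ => tmA3, (subst_tmA3 _).symm,
    by rw [subst_tmF3, subst_tmA3]⟩

lemma rs_b : RootStep RFC tmB3 (tmF3 tmB3) :=
  ⟨tmB3, tmF3 tmB3, by simp [RFC], fun _ => tmA3, (subst_tmB3 _).symm,
    by rw [subst_tmF3, subst_tmB3]⟩

lemma rs_C : RootStep RFC (tmC3 tmB3) (tmC3 (tmC3 tmA3)) :=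
  ⟨tmC3 tmB3, tmC3 (tmC3 tmA3), by simp [RFC], fun _ => tmA3,
    by rw [subst_tmC3, subst_tmB3], by rw [subst_tmC3, subst_tmC3, subst_tmA3]⟩

lemma rootstep_cases {s t : Tm SgFC ℕ} (h : RootStep RFC s t) :
    (s = tmA3 ∧ t = tmF3 tmA3) ∨ (s = tmB3 ∧ t = tmF3 tmB3) ∨
      (s = tmC3 tmB3 ∧ t = tmC3 (tmC3 tmA3)) := by
  rcases h with ⟨l, r, hm, σ, rfl, rfl⟩
  simp only [RFC, Set.mem_insert_iff, Set.mem_singleton_iff, Prod.mk.injEq] at hm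
  rcases hm with ⟨rfl, rfl⟩ | ⟨rfl, rfl⟩ | ⟨rfl, rfl⟩
  · exact Or.inl ⟨subst_tmA3 σ, by rw [subst_tmF3, subst_tmA3]⟩
  · exact Or.inr (Or.inl ⟨subst_tmB3 σ, by rw [subst_tmF3, subst_tmB3]⟩)
  · exact Or.inr (Or.inr ⟨by rw [subst_tmC3, subst_tmB3],
      by rw [subst_tmC3, subst_tmC3, subst_tmA3]⟩)

/-- The one-step relation whose reflexive-transitive closure unfolds `bired`. -/
abbrev BStep : TRel SgFC ℕ := fun s t => RootStep RFC s t ∨ liftRel (bired RFC) s t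

lemma bired_eq : bired RFC = Relation.ReflTransGen BStep :=
  Eq.symm (OrderHom.map_gfp (biHom RFC))

lemma bired_refl (s : Tm SgFC ℕ) : bired RFC s s := by
  rw [bired_eq]

lemma TRel.le_apply {R S : TRel SgFC ℕ} (h : R ≤ S) {s t : Tm SgFC ℕ} (hst : R s t) :
    S s t := h s t hst

lemma bired_trans {s t u : Tm SgFC ℕ} (h1 : bired RFC s t) (h2 : bired RFC t u) :
    bired RFC s u := by
  rw [bired_eq] at h1 h2 ⊢; exact h1.trans h2

lemma bired_C {u v : Tm SgFC ℕ} (h : bired RFC u v) : bired RFC (tmC3 u) (tmC3 v) := by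
  set R : TRel SgFC ℕ :=
    fun s t => bired RFC s t ∨ ∃ u v, s = tmC3 u ∧ t = tmC3 v ∧ bired RFC u v with hR
  have hsub : bired RFC ≤ R := fun a b hab => Or.inl hab
  have hle : R ≤ (biHom RFC) R := by
    intro s t hst
    rcases hst with hb | ⟨u, v, rfl, rfl, huv⟩
    · rw [bired_eq] at hb
      exact Relation.ReflTransGen.mono (fun x y hxy => hxy.imp id (fun h' => liftRel_mono hsub x y h')) _ _ hb
    · exact Relation.ReflTransGen.single
        (Or.inr (Or.inr ⟨SymFC.C, (fun _ => u), (fun _ => v), rfl, rfl,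
          fun i => Or.inl huv⟩))
  have hfin : R ≤ bired RFC := (biHom RFC).le_gfp hle
  exact TRel.le_apply hfin (Or.inr ⟨u, v, rfl, rfl, h⟩)

/-- `Cpow n t = C^n(t)`. -/
def Cpow : ℕ → Tm SgFC ℕ → Tm SgFC ℕ
  | 0, t => t
  | n+1, t => tmC3 (Cpow n t)

lemma bired_Cpow (n : ℕ) {u v : Tm SgFC ℕ} (h : bired RFC u v) :
    bired RFC (Cpow n u) (Cpow n v) := by
  induction n with
  | zero => exact h
  | succ n ih => exact bired_C ih

lemma agree_cpow (n : ℕ) (x y : Tm SgFC ℕ) : Agree n (Cpow n x) (Cpow n y) := by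
  induction n generalizing x y with
  | zero => trivial
  | succ n ih =>
    exact Or.inr ⟨SymFC.C, (fun _ => Cpow n x), (fun _ => Cpow n y), rfl, rfl,
      fun i => ih x y⟩

/-- Root-symbol classes. -/
def IsAF (t : Tm SgFC ℕ) : Prop := t = tmA3 ∨ ∃ u, t = tmF3 u

def IsC (t : Tm SgFC ℕ) : Prop := ∃ u, t = tmC3 u

lemma bired_isAF {s t : Tm SgFC ℕ} (h : bired RFC s t) (hs : IsAF s) : IsAF t := by
  rw [bired_eq] at h
  induction h with
  | refl => exact hs
  | tail h1 hstep ih =>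
    rcases hstep with hr | hl
    · rcases rootstep_cases hr with ⟨rfl, rfl⟩ | ⟨rfl, rfl⟩ | ⟨rfl, rfl⟩
      · exact Or.inr ⟨tmA3, rfl⟩
      · rcases ih with h2 | ⟨u, h2⟩
        · exact SymFC.noConfusion (node_inj_sym h2)
        · exact SymFC.noConfusion (node_inj_sym h2)
      · rcases ih with h2 | ⟨u, h2⟩
        · exact SymFC.noConfusion (node_inj_sym h2)
        · exact SymFC.noConfusion (node_inj_sym h2)
    · rcases hl with rfl | ⟨g, ss, ts, rfl, rfl, hc⟩
      · exact ih
      · rcases ih with h2 | ⟨u, h2⟩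
        · obtain rfl := node_inj_sym h2
          exact Or.inl (nodeA_eq ts)
        · obtain rfl := node_inj_sym h2
          exact Or.inr ⟨_, nodeF_eq ts⟩

lemma bired_isC {s t : Tm SgFC ℕ} (h : bired RFC s t) (hs : IsC s) : IsC t := by
  rw [bired_eq] at h
  induction h with
  | refl => exact hs
  | tail h1 hstep ih =>
    rcases hstep with hr | hl
    · rcases rootstep_cases hr with ⟨rfl, rfl⟩ | ⟨rfl, rfl⟩ | ⟨rfl, rfl⟩
      · rcases ih with ⟨u, h2⟩
        exact SymFC.noConfusion (node_inj_sym h2)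
      · rcases ih with ⟨u, h2⟩
        exact SymFC.noConfusion (node_inj_sym h2)
      · exact ⟨_, rfl⟩
    · rcases hl with rfl | ⟨g, ss, ts, rfl, rfl, hc⟩
      · exact ih
      · rcases ih with ⟨u, h2⟩
        obtain rfl := (node_inj_sym h2).symm
        exact ⟨_, nodeC_eq ts⟩

section WithCω
variable {Cω : Tm SgFC ℕ}

lemma not_IsAF_Cω (hCω : Cω = tmC3 Cω) (h : IsAF Cω) : False := by
  rcases h with h2 | ⟨u, h2⟩
  · rw [hCω] at h2; exact SymFC.noConfusion (node_inj_sym h2)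
  · rw [hCω] at h2; exact SymFC.noConfusion (node_inj_sym h2)

lemma cpow_Cω (hCω : Cω = tmC3 Cω) (n : ℕ) : Cpow n Cω = Cω := by
  induction n with
  | zero => rfl
  | succ n ih => show tmC3 (Cpow n Cω) = Cω; rw [ih, ← hCω]

lemma not_bired_Ca (hCω : Cω = tmC3 Cω) : ¬ bired RFC (tmC3 tmA3) Cω := by
  intro h
  rw [bired_eq] at h
  have key : ∀ t, Relation.ReflTransGen BStep (tmC3 tmA3) t →
      ∃ w, t = tmC3 w ∧ IsAF w := by
    intro t ht
    induction ht with
    | refl => exact ⟨tmA3, rfl, Or.inl rfl⟩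
    | tail h1 hstep ih =>
      obtain ⟨w, rfl, hw⟩ := ih
      rcases hstep with hr | hl
      · rcases rootstep_cases hr with ⟨h2, rfl⟩ | ⟨h2, rfl⟩ | ⟨h2, rfl⟩
        · exact SymFC.noConfusion (node_inj_sym h2)
        · exact SymFC.noConfusion (node_inj_sym h2)
        · obtain rfl := tmC3_inj h2
          rcases hw with h3 | ⟨u, h3⟩
          · exact SymFC.noConfusion (node_inj_sym h3)
          · exact SymFC.noConfusion (node_inj_sym h3)
      · rcases hl with rfl | ⟨g, ss, ts, h2, rfl, hc⟩
        · exact ⟨w, rfl, hw⟩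
        · have h2' : Tm.node SymFC.C (fun _ => w) = Tm.node g ss := h2
          cases node_inj_sym h2'
          have hss : (fun _ : Fin (SgFC.ar SymFC.C) => w) = ss := node_inj_args h2'
          refine ⟨ts ⟨0, Nat.one_pos⟩, nodeC_eq ts, ?_⟩
          have hchild := hc ⟨0, Nat.one_pos⟩
          rw [← hss] at hchild
          exact bired_isAF hchild hw
  obtain ⟨w, hw, haf⟩ := key Cω h
  have hew : w = Cω := by
    have : tmC3 Cω = tmC3 w := by rw [← hCω, ← hw]
    exact (tmC3_inj this).symm
  subst hew
  exact not_IsAF_Cω hCω haf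

lemma bired_from_Cω (hCω : Cω = tmC3 Cω) : ∀ n v, bired RFC Cω v → ∃ v', v = Cpow n v' ∧ bired RFC Cω v' := by
  intro n
  induction n with
  | zero => exact fun v h => ⟨v, rfl, h⟩
  | succ n ih =>
    intro v h
    rw [bired_eq] at h
    induction h with
    | refl =>
      exact ⟨Cω, (cpow_Cω hCω (n+1)).symm, bired_refl Cω⟩
    | tail h1 hstep ih2 =>
      obtain ⟨u', rfl, hu⟩ := ih2
      have hform : Cpow (n+1) u' = tmC3 (Cpow n u') := rfl
      rcases hstep with hr | hl
      · rcases rootstep_cases hr with ⟨h2, rfl⟩ | ⟨h2, rfl⟩ | ⟨h2, rfl⟩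
        · rw [hform] at h2; exact SymFC.noConfusion (node_inj_sym h2)
        · rw [hform] at h2; exact SymFC.noConfusion (node_inj_sym h2)
        · rw [hform] at h2
          have h3 : Cpow n u' = tmB3 := tmC3_inj h2
          cases n with
          | zero =>
            have h4 : u' = tmB3 := h3
            subst h4
            rcases bired_isC hu ⟨Cω, hCω⟩ with ⟨u, h5⟩
            exact SymFC.noConfusion (node_inj_sym h5)
          | succ m =>
            have h4 : tmC3 (Cpow m u') = tmB3 := h3
            exact SymFC.noConfusion (node_inj_sym h4)
      · rcases hl with rfl | ⟨g, ss, ts, h2, rfl, hc⟩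
        · exact ⟨u', rfl, hu⟩
        · have h2' : Tm.node SymFC.C (fun _ => Cpow n u') = Tm.node g ss := h2
          cases node_inj_sym h2'
          have hss : (fun _ : Fin (SgFC.ar SymFC.C) => Cpow n u') = ss := node_inj_args h2'
          have hchild := hc ⟨0, Nat.one_pos⟩
          rw [← hss] at hchild
          have hCn : bired RFC Cω (Cpow n u') := by
            have := bired_Cpow n hu
            rwa [cpow_Cω hCω n] at this
          have hCc : bired RFC Cω (ts ⟨0, Nat.one_pos⟩) := bired_trans hCn hchild
          obtain ⟨v', hv, hb⟩ := ih _ hCc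
          exact ⟨v', by rw [nodeC_eq ts, hv]; rfl, hb⟩

lemma bired_to_Cω (hCω : Cω = tmC3 Cω) : ∀ n v, bired RFC v Cω → ∃ v', v = Cpow n v' ∧ bired RFC v' Cω := by
  intro n
  induction n with
  | zero => exact fun v h => ⟨v, rfl, h⟩
  | succ n ih =>
    intro v h
    rw [bired_eq] at h
    induction h using Relation.ReflTransGen.head_induction_on with
    | refl =>
      exact ⟨Cω, (cpow_Cω hCω (n+1)).symm, bired_refl Cω⟩
    | head hstep h1 ih2 =>
      obtain ⟨u', hu'eq, hu⟩ := ih2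
      have hform : Cpow (n+1) u' = tmC3 (Cpow n u') := rfl
      rcases hstep with hr | hl
      · rcases rootstep_cases hr with ⟨rfl, h2⟩ | ⟨rfl, h2⟩ | ⟨rfl, h2⟩
        · rw [hu'eq, hform] at h2; exact SymFC.noConfusion (node_inj_sym h2)
        · rw [hu'eq, hform] at h2; exact SymFC.noConfusion (node_inj_sym h2)
        · rw [hu'eq, hform] at h2
          have h3 : tmC3 tmA3 = Cpow n u' := tmC3_inj h2.symm
          cases n with
          | zero =>
            have h4 : tmC3 tmA3 = u' := h3
            rw [← h4] at hu
            exact absurd hu (not_bired_Ca hCω)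
          | succ m =>
            have h4 : tmC3 tmA3 = tmC3 (Cpow m u') := h3
            have h5 : tmA3 = Cpow m u' := tmC3_inj h4
            cases m with
            | zero =>
              have h6 : tmA3 = u' := h5
              rw [← h6] at hu
              exact (not_IsAF_Cω hCω (bired_isAF hu (Or.inl rfl))).elim
            | succ k =>
              have h6 : tmA3 = tmC3 (Cpow k u') := h5
              exact SymFC.noConfusion (node_inj_sym h6)
      · rcases hl with heq | ⟨g, ss, ts, rfl, h2, hc⟩
        · exact ⟨u', heq.trans hu'eq, hu⟩
        · rw [hu'eq, hform] at h2
          have h2' : Tm.node SymFC.C (fun _ => Cpow n u') = Tm.node g ts := h2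
          cases node_inj_sym h2'
          have hts : (fun _ : Fin (SgFC.ar SymFC.C) => Cpow n u') = ts := node_inj_args h2'
          have hchild := hc ⟨0, Nat.one_pos⟩
          rw [← hts] at hchild
          have hCn : bired RFC (Cpow n u') Cω := by
            have := bired_Cpow n hu
            rwa [cpow_Cω hCω n] at this
          have hCc : bired RFC (ss ⟨0, Nat.one_pos⟩) Cω := bired_trans hchild hCn
          obtain ⟨v', hv, hb⟩ := ih _ hCc
          exact ⟨v', by rw [nodeC_eq ss, hv]; rfl, hb⟩

lemma eq_Cω_of_bired_from (hCω : Cω = tmC3 Cω) {v : Tm SgFC ℕ} (h : bired RFC Cω v) : v = Cω := by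
  apply eq_of_agree
  intro n
  obtain ⟨v', rfl, _⟩ := bired_from_Cω hCω n v h
  have := agree_cpow n v' Cω
  rwa [cpow_Cω hCω n] at this

lemma eq_Cω_of_bired_to (hCω : Cω = tmC3 Cω) {v : Tm SgFC ℕ} (h : bired RFC v Cω) : v = Cω := by
  apply eq_of_agree
  intro n
  obtain ⟨v', rfl, _⟩ := bired_to_Cω hCω n v h
  have := agree_cpow n v' Cω
  rwa [cpow_Cω hCω n] at this

end WithCω

/-- For the TRS `{a → f(a), b → f(b), C(b) → C(C(a))}` and the unique
term `C^ω` with `C^ω = C(C^ω)`: `C(a) =∞ C^ω` holds, but not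
`C(a) ((∞→)⁻¹ ∪ ∞→)* C^ω`; hence the inclusion `((∞→)⁻¹ ∪ ∞→)* ⊆ =∞` is strict
for this TRS. -/
theorem ieq_strict_example (Cω : Tm SgFC ℕ) (hCω : Cω = tmC3 Cω) :
    ieq RFC (tmC3 tmA3) Cω ∧
    ¬ Relation.ReflTransGen (fun s t => bired RFC t s ∨ bired RFC s t) (tmC3 tmA3) Cω := by
  constructor
  · -- positive part: `C(a) =∞ C^ω`
    set U : TRel SgFC ℕ :=
      fun s t => (s = tmC3 tmA3 ∧ t = Cω) ∨ (s = tmA3 ∧ t = tmB3) with hU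
    have hle : U ≤ (ieqHom RFC) U := by
      intro s t hst
      rcases hst with ⟨hs, ht⟩ | ⟨hs, ht⟩ <;> subst hs <;> rw [ht]
      · have s1 : liftRel U (tmC3 tmA3) (tmC3 tmB3) :=
          Or.inr ⟨SymFC.C, (fun _ => tmA3), (fun _ => tmB3), rfl, rfl,
            fun i => Or.inr ⟨rfl, rfl⟩⟩
        have s3 : liftRel U (tmC3 (tmC3 tmA3)) Cω := by
          rw [hCω]
          exact Or.inr ⟨SymFC.C, (fun _ => tmC3 tmA3), (fun _ => Cω), rfl, rfl,
            fun i => Or.inl ⟨rfl, rfl⟩⟩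
        exact Relation.ReflTransGen.head (Or.inr (Or.inr s1))
          (Relation.ReflTransGen.head (Or.inr (Or.inl rs_C))
            (Relation.ReflTransGen.single (Or.inr (Or.inr s3))))
      · have s2 : liftRel U (tmF3 tmA3) (tmF3 tmB3) :=
          Or.inr ⟨SymFC.f, (fun _ => tmA3), (fun _ => tmB3), rfl, rfl,
            fun i => Or.inr ⟨rfl, rfl⟩⟩
        exact Relation.ReflTransGen.head (Or.inr (Or.inl rs_a))
          (Relation.ReflTransGen.head (Or.inr (Or.inr s2))
            (Relation.ReflTransGen.single (Or.inl rs_b)))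
    have hfin : U ≤ ieq RFC := (ieqHom RFC).le_gfp hle
    exact TRel.le_apply hfin (Or.inl ⟨rfl, rfl⟩)
  · -- negative part
    intro hconv
    have key : ∀ t, Relation.ReflTransGen
        (fun s t => bired RFC t s ∨ bired RFC s t) (tmC3 tmA3) t → t ≠ Cω := by
      intro t ht
      induction ht with
      | refl =>
        intro h
        rw [hCω] at h
        have h2 : tmA3 = Cω := tmC3_inj h
        rw [hCω] at h2
        exact SymFC.noConfusion (node_inj_sym h2)
      | tail h1 hstep ih =>
        intro h
        subst h
        rcases hstep with h2 | h2
        · exact ih (eq_Cω_of_bired_from hCω h2)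
        · exact ih (eq_Cω_of_bired_to hCω h2)
    exact key Cω hconv rfl
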